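/- For every tree S and every subset Q ⊆ V(S) there exist two subtrees S₁ and S₂ which divide S and satisfy |Q ∩ V(S₁)| ≥ |Q|/3 and |Q ∩ V(S₂)| ≥ |Q|/3. -/

import Mathlib

open SimpleGraph

namespace Stmt5Aux

variable {V : Type*} {S : SimpleGraph V}

/-- The branch at `v` towards `u`: vertices strictly closer to `u` than to `v`. -/
def br (S : SimpleGraph V) (v u : V) : Set V := {x | S.dist x u < S.dist x v}

lemma mem_br {v u x : V} : x ∈ br S v u ↔ S.dist x u < S.dist x v := Iff.rfl

lemma self_not_mem_br {v u : V} : v ∉ br S v u := by simp [br, SimpleGraph.dist_self]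

lemma adj_dist_ne (hc : S.Connected) (ha : S.IsAcyclic) {u v : V} (h : S.Adj u v) (x : V) :
    S.dist x u ≠ S.dist x v := by
  classical
  intro heq
  obtain ⟨p, hp, hlen⟩ := (hc x u).exists_path_of_dist
  have hd1 : S.dist v u = 1 := by rw [S.dist_eq_one_iff_adj]; exact h.symm
  have hv : v ∉ p.support := by
    intro hv
    have h1 := congrArg Walk.length (p.take_spec hv)
    rw [Walk.length_append] at h1
    have h2 : S.dist x v ≤ (p.takeUntil v hv).length := S.dist_le _
    have h3 : S.dist v u ≤ (p.dropUntil v hv).length := S.dist_le _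
    omega
  have hq : (p.concat h).IsPath := by
    rw [← Walk.isPath_reverse_iff, Walk.reverse_concat]
    exact (hp.reverse).cons (by simpa using hv)
  obtain ⟨r, hr, hrlen⟩ := (hc x v).exists_path_of_dist
  have heqp : (p.concat h) = r := by
    have := ha.path_unique ⟨p.concat h, hq⟩ ⟨r, hr⟩
    exact congrArg Subtype.val this
  have := congrArg Walk.length heqp
  rw [Walk.length_concat, hlen, hrlen] at this
  omega

lemma mem_br_succ (hc : S.Connected) {v u x : V} (h : S.Adj v u) (hx : x ∈ br S v u) :
    S.dist x u + 1 = S.dist x v := by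
  have h1 : S.dist x v ≤ S.dist x u + S.dist u v := hc.dist_triangle
  have h2 : S.dist u v = 1 := by rw [S.dist_eq_one_iff_adj]; exact h.symm
  have := hx
  rw [mem_br] at this
  omega

lemma not_mem_br_succ (hc : S.Connected) (ha : S.IsAcyclic) {v u x : V} (h : S.Adj v u)
    (hx : x ∉ br S v u) : S.dist x v + 1 = S.dist x u := by
  have h1 : S.dist x u ≤ S.dist x v + S.dist v u := hc.dist_triangle
  have h2 : S.dist v u = 1 := by rw [S.dist_eq_one_iff_adj]; exact h
  have h3 := adj_dist_ne hc ha h.symm x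
  rw [mem_br, not_lt] at hx
  omega

lemma mem_br_self (hc : S.Connected) {v u : V} (h : S.Adj v u) : u ∈ br S v u := by
  rw [mem_br, S.dist_self]
  exact hc.pos_dist_of_ne (fun e => h.ne e.symm)

lemma br_cover (hc : S.Connected) {v x : V} (hx : x ≠ v) :
    ∃ u, S.Adj v u ∧ x ∈ br S v u := by
  obtain ⟨p, hp, hlen⟩ := (hc v x).exists_path_of_dist
  cases p with
  | nil => exact absurd rfl hx.symm
  | @cons _ b _ hadj q =>
    refine ⟨b, hadj, ?_⟩
    rw [mem_br]
    have h1 : S.dist b x ≤ q.length := S.dist_le q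
    rw [Walk.length_cons] at hlen
    have e1 : S.dist x b = S.dist b x := SimpleGraph.dist_comm
    have e2 : S.dist x v = S.dist v x := SimpleGraph.dist_comm
    omega


lemma geo_avoid (hc : S.Connected) {v u x : V} (h : S.Adj v u) (hx : x ∈ br S v u) :
    ∃ p : S.Walk x u, p.IsPath ∧ p.length = S.dist x u ∧ v ∉ p.support := by
  classical
  obtain ⟨p, hp, hlen⟩ := (hc x u).exists_path_of_dist
  refine ⟨p, hp, hlen, fun hv => ?_⟩
  have h1 := congrArg Walk.length (p.take_spec hv)
  rw [Walk.length_append] at h1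
  have h2 : S.dist x v ≤ (p.takeUntil v hv).length := S.dist_le _
  have h3 : S.dist v u ≤ (p.dropUntil v hv).length := S.dist_le _
  have h4 : S.dist v u = 1 := by rw [S.dist_eq_one_iff_adj]; exact h
  have h5 := mem_br_succ hc h hx
  omega

lemma br_disjoint (hc : S.Connected) (ha : S.IsAcyclic) {v u u' : V} (h : S.Adj v u)
    (h' : S.Adj v u') (hne : u ≠ u') : Disjoint (br S v u) (br S v u') := by
  rw [Set.disjoint_left]
  intro x hx hx'
  obtain ⟨p, hp, hlen, hvp⟩ := geo_avoid hc h hx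
  obtain ⟨p', hp', hlen', hvp'⟩ := geo_avoid hc h' hx'
  have hq : (p.concat h.symm).IsPath := by
    rw [← Walk.isPath_reverse_iff, Walk.reverse_concat]
    exact (hp.reverse).cons (by simpa using hvp)
  have hq' : (p'.concat h'.symm).IsPath := by
    rw [← Walk.isPath_reverse_iff, Walk.reverse_concat]
    exact (hp'.reverse).cons (by simpa using hvp')
  have heq : p.concat h.symm = p'.concat h'.symm :=
    congrArg Subtype.val (ha.path_unique ⟨p.concat h.symm, hq⟩ ⟨p'.concat h'.symm, hq'⟩)
  have hs := congrArg (fun w => w.reverse.support) heq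
  simp only [Walk.reverse_concat] at hs
  rw [Walk.support_cons, Walk.support_cons, p.reverse.support_eq_cons,
    p'.reverse.support_eq_cons] at hs
  simp only [List.cons.injEq] at hs
  exact hne hs.2.1

lemma br_reach (hc : S.Connected) {v u x : V} (h : S.Adj v u) (hx : x ∈ br S v u) :
    ∃ p : S.Walk x u, ∀ y ∈ p.support, y ∈ br S v u := by
  classical
  obtain ⟨p, hp, hlen⟩ := (hc x u).exists_path_of_dist
  refine ⟨p, fun y hy => ?_⟩
  have h1 := congrArg Walk.length (p.take_spec hy)
  rw [Walk.length_append] at h1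
  have h2 : S.dist x y ≤ (p.takeUntil y hy).length := S.dist_le _
  have h3 : S.dist y u ≤ (p.dropUntil y hy).length := S.dist_le _
  have h4 : S.dist x v ≤ S.dist x y + S.dist y v := hc.dist_triangle
  have h5 := mem_br_succ hc h hx
  rw [mem_br]
  omega

lemma reach_induce {s : Set V} {x y : V} (p : S.Walk x y) (hsup : ∀ z ∈ p.support, z ∈ s)
    (hx : x ∈ s) (hy : y ∈ s) :
    ((⊤ : S.Subgraph).induce s).coe.Reachable ⟨x, hx⟩ ⟨y, hy⟩ := by
  induction p with
  | nil => exact Reachable.refl _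
  | @cons a b c hadj q ih =>
    have hmid : b ∈ s := hsup b (by simp)
    refine (Adj.reachable ?_).trans (ih (fun z hz => hsup z (by simp [hz])) hmid hy)
    show ((⊤ : S.Subgraph).induce s).coe.Adj ⟨a, hx⟩ ⟨b, hmid⟩
    simp only [Subgraph.coe_adj, Subgraph.induce_adj, Subgraph.top_adj]
    exact ⟨hx, hmid, hadj⟩


lemma ncard_biUnion [Fintype V] (Q : Set V) (T : Finset V) (f : V → Set V)
    (hd : (T : Set V).Pairwise (Function.onFun Disjoint f)) :
    (Q ∩ ⋃ u ∈ T, f u).ncard = ∑ u ∈ T, (Q ∩ f u).ncard := by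
  classical
  induction T using Finset.induction_on with
  | empty => simp
  | @insert a T ha ih =>
    have hpw : (T : Set V).Pairwise (Function.onFun Disjoint f) :=
      hd.mono (by simp [Finset.coe_insert, Set.subset_insert])
    have hdisj : Disjoint (Q ∩ f a) (Q ∩ ⋃ u ∈ T, f u) := by
      refine Set.disjoint_left.mpr fun x hx hx' => ?_
      obtain ⟨-, hxa⟩ := hx
      obtain ⟨-, hxU⟩ := hx'
      simp only [Set.mem_iUnion] at hxU
      obtain ⟨u, hu, hxu⟩ := hxU
      have hau : a ≠ u := fun e => ha (e ▸ hu)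
      exact Set.disjoint_left.mp
        (hd (by simp) (by simp [hu]) hau) hxa hxu
    rw [Finset.set_biUnion_insert, Set.inter_union_distrib_left,
      Set.ncard_union_eq hdisj (Set.toFinite _) (Set.toFinite _),
      Finset.sum_insert ha, ih hpw]

lemma greedy {α : Type*} (N : Finset α) (w : α → ℕ) (ε n : ℕ)
    (htot : ε + ∑ u ∈ N, w u = n) (hhalf : ∀ u ∈ N, 2 * w u ≤ n) :
    ∃ T ⊆ N, n ≤ 3 * (ε + ∑ u ∈ T, w u) ∧ 3 * (∑ u ∈ T, w u) ≤ 2 * n := by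
  classical
  by_cases hbig : ∃ u ∈ N, n ≤ 3 * w u
  · obtain ⟨u, hu, h3⟩ := hbig
    have := hhalf u hu
    exact ⟨{u}, Finset.singleton_subset_iff.mpr hu, by
      rw [Finset.sum_singleton]; omega, by rw [Finset.sum_singleton]; omega⟩
  · push_neg at hbig
    set P := N.powerset.filter (fun T => n ≤ 3 * (ε + ∑ u ∈ T, w u)) with hP
    have hNP : N ∈ P := by
      simp only [hP, Finset.mem_filter, Finset.mem_powerset]
      exact ⟨le_refl _, by omega⟩
    obtain ⟨T, hTP, hmin⟩ := P.exists_min_image (fun T => ∑ u ∈ T, w u + T.card) ⟨N, hNP⟩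
    simp only [hP, Finset.mem_filter, Finset.mem_powerset] at hTP
    refine ⟨T, hTP.1, hTP.2, ?_⟩
    rcases T.eq_empty_or_nonempty with rfl | ⟨u, hu⟩
    · simp
    · have hsum : w u + ∑ x ∈ T.erase u, w x = ∑ x ∈ T, w x := Finset.add_sum_erase _ _ hu
      have hcard : (T.erase u).card + 1 = T.card := Finset.card_erase_add_one hu
      have hnot : ¬ (n ≤ 3 * (ε + ∑ x ∈ T.erase u, w x)) := by
        intro hcond
        have hmem : T.erase u ∈ P := by
          simp only [hP, Finset.mem_filter, Finset.mem_powerset]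
          exact ⟨(T.erase_subset u).trans hTP.1, hcond⟩
        have := hmin _ hmem
        omega
      have h3u := hbig u (hTP.1 hu)
      omega


lemma ncard_inter_eq [Fintype V] (Q s : Set V) [DecidablePred (· ∈ s)] :
    (Q ∩ s).ncard = (Q.toFinite.toFinset.filter (· ∈ s)).card := by
  classical
  rw [Set.ncard_eq_toFinset_card _ (Set.toFinite _)]
  congr 1
  ext x
  simp [Set.Finite.mem_toFinset, Finset.mem_filter]

lemma centroid [Fintype V] (hc : S.Connected) (ha : S.IsAcyclic) (Q : Set V) :
    ∃ v : V, ∀ u, S.Adj v u → 2 * (Q ∩ br S v u).ncard ≤ Q.ncard := by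
  classical
  haveI : Nonempty V := hc.nonempty
  set F := Q.toFinite.toFinset with hF
  obtain ⟨v, -, hvmin⟩ := Finset.univ.exists_min_image (fun v => ∑ q ∈ F, S.dist q v)
    ⟨Classical.arbitrary V, Finset.mem_univ _⟩
  refine ⟨v, fun u hadj => ?_⟩
  set P1 := F.filter (· ∈ br S v u) with hP1
  set P2 := F.filter (fun q => ¬ (q ∈ br S v u)) with hP2
  have hgv : ∑ q ∈ F, S.dist q v = (∑ q ∈ P1, S.dist q u + P1.card) + ∑ q ∈ P2, S.dist q v := by
    rw [← Finset.sum_filter_add_sum_filter_not F (· ∈ br S v u) (fun q => S.dist q v)]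
    congr 1
    calc ∑ q ∈ P1, S.dist q v = ∑ q ∈ P1, (S.dist q u + 1) :=
          Finset.sum_congr rfl (fun q hq =>
            (mem_br_succ hc hadj (Finset.mem_filter.mp hq).2).symm)
      _ = ∑ q ∈ P1, S.dist q u + P1.card := by
          rw [Finset.sum_add_distrib, Finset.sum_const, smul_eq_mul, mul_one]
  have hgu : ∑ q ∈ F, S.dist q u = ∑ q ∈ P1, S.dist q u + (∑ q ∈ P2, S.dist q v + P2.card) := by
    rw [← Finset.sum_filter_add_sum_filter_not F (· ∈ br S v u) (fun q => S.dist q u)]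
    congr 1
    calc ∑ q ∈ P2, S.dist q u = ∑ q ∈ P2, (S.dist q v + 1) :=
          Finset.sum_congr rfl (fun q hq =>
            (not_mem_br_succ hc ha hadj (Finset.mem_filter.mp hq).2).symm)
      _ = ∑ q ∈ P2, S.dist q v + P2.card := by
          rw [Finset.sum_add_distrib, Finset.sum_const, smul_eq_mul, mul_one]
  have hmin := hvmin u (Finset.mem_univ u)
  have hcards : P1.card + P2.card = F.card :=
    Finset.card_filter_add_card_filter_not (· ∈ br S v u)
  have hw : (Q ∩ br S v u).ncard = P1.card := ncard_inter_eq Q (br S v u)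
  have hn : Q.ncard = F.card := Set.ncard_eq_toFinset_card _ _
  omega

end Stmt5Aux

/-- Two subtrees (connected subgraphs) `A` and `B` *divide* the tree `S` if together
they cover `S` and they intersect in exactly one vertex. -/
def Divides {V : Type*} {S : SimpleGraph V} (A B : S.Subgraph) : Prop :=
  A.Connected ∧ B.Connected ∧ A ⊔ B = ⊤ ∧ ∃ v, A.verts ∩ B.verts = {v}

/-- For every tree `S` and every subset `Q ⊆ V(S)` there exist two subtrees `S₁`, `S₂`
which divide `S` and satisfy `|Q ∩ V(S₁)| ≥ |Q|/3` and `|Q ∩ V(S₂)| ≥ |Q|/3`. -/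
theorem statement_5 {V : Type*} [Fintype V] (S : SimpleGraph V) (hS : S.IsTree)
    (Q : Set V) :
    ∃ A B : S.Subgraph, Divides A B ∧
      (Q.ncard : ℝ) / 3 ≤ (Q ∩ A.verts).ncard ∧
      (Q.ncard : ℝ) / 3 ≤ (Q ∩ B.verts).ncard := by
  classical
  obtain ⟨hc, ha⟩ := hS
  obtain ⟨v, hcent⟩ := Stmt5Aux.centroid hc ha Q
  set N := S.neighborFinset v with hN
  have hNadj : ∀ u ∈ N, S.Adj v u := fun u hu => by rwa [hN, S.mem_neighborFinset] at hu
  have hd : (↑N : Set V).Pairwise (Function.onFun Disjoint (Stmt5Aux.br S v)) := by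
    intro a haa b hb hab
    exact Stmt5Aux.br_disjoint hc ha (hNadj a (by simpa using haa))
      (hNadj b (by simpa using hb)) hab
  have hcov : ∀ x : V, x ≠ v → ∃ u ∈ N, x ∈ Stmt5Aux.br S v u := by
    intro x hx
    obtain ⟨u, hadj, hxu⟩ := Stmt5Aux.br_cover hc hx
    exact ⟨u, by rw [hN, S.mem_neighborFinset]; exact hadj, hxu⟩
  set w : V → ℕ := fun u => (Q ∩ Stmt5Aux.br S v u).ncard with hwdef
  set ε : ℕ := (Q ∩ {v}).ncard with hεdef
  have hdecomp : ∀ T : Finset V, T ⊆ N →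
      (Q ∩ ({v} ∪ ⋃ u ∈ T, Stmt5Aux.br S v u)).ncard = ε + ∑ u ∈ T, w u := by
    intro T hT
    have hdisj : Disjoint (Q ∩ {v}) (Q ∩ ⋃ u ∈ T, Stmt5Aux.br S v u) := by
      refine Set.disjoint_left.mpr ?_
      intro x hx1 hx2
      have hxv : x = v := hx1.2
      obtain ⟨-, hxU⟩ := hx2
      simp only [Set.mem_iUnion] at hxU
      obtain ⟨u, -, hxu⟩ := hxU
      exact Stmt5Aux.self_not_mem_br (hxv ▸ hxu)
    rw [Set.inter_union_distrib_left,
        Set.ncard_union_eq hdisj (Set.toFinite _) (Set.toFinite _),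
        Stmt5Aux.ncard_biUnion Q T _ (hd.mono (Finset.coe_subset.mpr hT))]
  have htot : ε + ∑ u ∈ N, w u = Q.ncard := by
    have huniv : ({v} ∪ ⋃ u ∈ N, Stmt5Aux.br S v u : Set V) = Set.univ := by
      ext x
      simp only [Set.mem_univ, iff_true, Set.mem_union, Set.mem_iUnion,
        Set.mem_singleton_iff]
      by_cases hx : x = v
      · exact Or.inl hx
      · obtain ⟨u, hu, hxu⟩ := hcov x hx
        exact Or.inr ⟨u, hu, hxu⟩
    have h1 := hdecomp N (le_refl _)
    rw [huniv, Set.inter_univ] at h1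
    omega
  have hhalf : ∀ u ∈ N, 2 * w u ≤ Q.ncard := fun u hu => hcent u (hNadj u hu)
  obtain ⟨T, hTN, hA3, hT2n⟩ := Stmt5Aux.greedy N w ε Q.ncard htot hhalf
  set sA : Set V := {v} ∪ ⋃ u ∈ T, Stmt5Aux.br S v u with hsA
  set sB : Set V := {v} ∪ ⋃ u ∈ N \ T, Stmt5Aux.br S v u with hsB
  have hconn : ∀ T' : Finset V, T' ⊆ N →
      ((⊤ : S.Subgraph).induce ({v} ∪ ⋃ u ∈ T', Stmt5Aux.br S v u)).Connected := by
    intro T' hT'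
    set s : Set V := {v} ∪ ⋃ u ∈ T', Stmt5Aux.br S v u with hs
    have hvs : v ∈ s := Or.inl rfl
    have key : ∀ (z : V) (hz : z ∈ s),
        (((⊤ : S.Subgraph).induce s)).coe.Reachable ⟨z, hz⟩ ⟨v, hvs⟩ := by
      intro z hz
      rcases hz with hzv | hzU
      · have : z = v := hzv
        subst this
        exact Reachable.refl _
      · simp only [Set.mem_iUnion] at hzU
        obtain ⟨u, hu, hzu⟩ := hzU
        have hadj := hNadj u (hT' hu)
        obtain ⟨p, hp⟩ := Stmt5Aux.br_reach hc hadj hzu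
        refine Stmt5Aux.reach_induce (p.concat hadj.symm) ?_ _ hvs
        intro z' hz'
        rw [Walk.support_concat] at hz'
        rcases List.mem_append.mp hz' with h1 | h1
        · exact Or.inr (Set.mem_iUnion.mpr ⟨u, Set.mem_iUnion.mpr ⟨hu, hp z' h1⟩⟩)
        · exact Or.inl (List.mem_singleton.mp h1)
    rw [Subgraph.connected_iff]
    refine ⟨⟨?_⟩, ⟨v, hvs⟩⟩
    rintro ⟨x, hx⟩ ⟨y, hy⟩
    exact (key x hx).trans (key y hy).symm
  have hedge : ∀ x y : V, S.Adj x y → (x ∈ sA ∧ y ∈ sA) ∨ (x ∈ sB ∧ y ∈ sB) := by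
    have main : ∀ x y : V, S.Adj x y → x ≠ v → y ≠ v →
        ∃ u ∈ N, x ∈ Stmt5Aux.br S v u ∧ y ∈ Stmt5Aux.br S v u ∧
          ∀ u' ∈ N, (x ∈ Stmt5Aux.br S v u' ∨ y ∈ Stmt5Aux.br S v u') → u' = u := by
      intro x y hxy hxv hyv
      obtain ⟨u, hu, hxu⟩ := hcov x hxv
      obtain ⟨u', hu', hyu'⟩ := hcov y hyv
      have hne := Stmt5Aux.adj_dist_ne hc ha hxy v
      have c1 : S.dist v x = S.dist x v := SimpleGraph.dist_comm
      have c2 : S.dist v y = S.dist y v := SimpleGraph.dist_comm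
      have hdyx : S.dist y x = 1 := by rw [S.dist_eq_one_iff_adj]; exact hxy.symm
      have hdxy : S.dist x y = 1 := by rw [S.dist_eq_one_iff_adj]; exact hxy
      have hkey : y ∈ Stmt5Aux.br S v u ∨ x ∈ Stmt5Aux.br S v u' := by
        rcases lt_or_gt_of_ne hne with hlt | hgt
        · left
          have h1 : S.dist y u ≤ S.dist y x + S.dist x u := hc.dist_triangle
          have h2 := Stmt5Aux.mem_br_succ hc (hNadj u hu) hxu
          rw [Stmt5Aux.mem_br]
          omega
        · right
          have h1 : S.dist x u' ≤ S.dist x y + S.dist y u' := hc.dist_triangle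
          have h2 := Stmt5Aux.mem_br_succ hc (hNadj u' hu') hyu'
          rw [Stmt5Aux.mem_br]
          omega
      have huu' : u = u' := by
        by_contra hneq
        have hdis := hd (by simpa using hu) (by simpa using hu') hneq
        rcases hkey with hk | hk
        · exact Set.disjoint_left.mp hdis hk hyu'
        · exact Set.disjoint_left.mp hdis hxu hk
      subst huu'
      refine ⟨u, hu, hxu, hyu', ?_⟩
      intro u'' hu'' hmem
      by_contra hneq
      have hdis := hd (by simpa using hu'') (by simpa using hu) hneq
      rcases hmem with hm | hm
      · exact Set.disjoint_left.mp hdis hm hxu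
      · exact Set.disjoint_left.mp hdis hm hyu'
    intro x y hxy
    by_cases hxv : x = v
    · subst hxv
      have hyN : y ∈ N := by rw [hN, S.mem_neighborFinset]; exact hxy
      have hybr : y ∈ Stmt5Aux.br S x y := Stmt5Aux.mem_br_self hc hxy
      by_cases hyT : y ∈ T
      · exact Or.inl ⟨Or.inl rfl, Or.inr (Set.mem_iUnion.mpr ⟨y, Set.mem_iUnion.mpr ⟨hyT, hybr⟩⟩)⟩
      · exact Or.inr ⟨Or.inl rfl, Or.inr (Set.mem_iUnion.mpr
          ⟨y, Set.mem_iUnion.mpr ⟨Finset.mem_sdiff.mpr ⟨hyN, hyT⟩, hybr⟩⟩)⟩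
    · by_cases hyv : y = v
      · subst hyv
        have hxN : x ∈ N := by rw [hN, S.mem_neighborFinset]; exact hxy.symm
        have hxbr : x ∈ Stmt5Aux.br S y x := Stmt5Aux.mem_br_self hc hxy.symm
        by_cases hxT : x ∈ T
        · exact Or.inl ⟨Or.inr (Set.mem_iUnion.mpr ⟨x, Set.mem_iUnion.mpr ⟨hxT, hxbr⟩⟩),
            Or.inl rfl⟩
        · exact Or.inr ⟨Or.inr (Set.mem_iUnion.mpr
            ⟨x, Set.mem_iUnion.mpr ⟨Finset.mem_sdiff.mpr ⟨hxN, hxT⟩, hxbr⟩⟩), Or.inl rfl⟩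
      · obtain ⟨u, hu, hxu, hyu, -⟩ := main x y hxy hxv hyv
        by_cases huT : u ∈ T
        · exact Or.inl ⟨Or.inr (Set.mem_iUnion.mpr ⟨u, Set.mem_iUnion.mpr ⟨huT, hxu⟩⟩),
            Or.inr (Set.mem_iUnion.mpr ⟨u, Set.mem_iUnion.mpr ⟨huT, hyu⟩⟩)⟩
        · have huNT : u ∈ N \ T := Finset.mem_sdiff.mpr ⟨hu, huT⟩
          exact Or.inr ⟨Or.inr (Set.mem_iUnion.mpr ⟨u, Set.mem_iUnion.mpr ⟨huNT, hxu⟩⟩),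
            Or.inr (Set.mem_iUnion.mpr ⟨u, Set.mem_iUnion.mpr ⟨huNT, hyu⟩⟩)⟩
  refine ⟨(⊤ : S.Subgraph).induce sA, (⊤ : S.Subgraph).induce sB,
    ⟨hconn T hTN, hconn (N \ T) (Finset.sdiff_subset), ?_, ⟨v, ?_⟩⟩, ?_, ?_⟩
  · -- sup = top
    have hverts : sA ∪ sB = Set.univ := by
      ext x
      simp only [Set.mem_univ, iff_true]
      by_cases hx : x = v
      · exact Or.inl (Or.inl hx)
      · obtain ⟨u, hu, hxu⟩ := hcov x hx
        by_cases huT : u ∈ T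
        · exact Or.inl (Or.inr (Set.mem_iUnion.mpr ⟨u, Set.mem_iUnion.mpr ⟨huT, hxu⟩⟩))
        · exact Or.inr (Or.inr (Set.mem_iUnion.mpr
            ⟨u, Set.mem_iUnion.mpr ⟨Finset.mem_sdiff.mpr ⟨hu, huT⟩, hxu⟩⟩))
    ext x y
    · constructor
      · intro _; trivial
      · intro _
        have : x ∈ sA ∪ sB := hverts ▸ Set.mem_univ x
        exact this
    · simp only [Subgraph.sup_adj, Subgraph.induce_adj, Subgraph.top_adj]
      constructor
      · rintro (⟨-, -, h⟩ | ⟨-, -, h⟩) <;> exact h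
      · intro h
        rcases hedge x y h with ⟨h1, h2⟩ | ⟨h1, h2⟩
        · exact Or.inl ⟨h1, h2, h⟩
        · exact Or.inr ⟨h1, h2, h⟩
  · -- intersection of vertex sets
    apply subset_antisymm
    · rintro x ⟨hxA, hxB⟩
      rcases hxA with hxv | hxA
      · exact hxv
      rcases hxB with hxv | hxB
      · exact hxv
      simp only [Set.mem_iUnion] at hxA hxB
      obtain ⟨u, huT, hxu⟩ := hxA
      obtain ⟨u', hu'NT, hxu'⟩ := hxB
      have hne : u ≠ u' := by
        rintro rfl
        exact (Finset.mem_sdiff.mp hu'NT).2 huT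
      have hdis := hd (by simpa using hTN huT) (by simpa using (Finset.mem_sdiff.mp hu'NT).1) hne
      exact absurd hxu' (Set.disjoint_left.mp hdis hxu)
    · intro x hx
      have hxv : x = v := hx
      subst hxv
      exact ⟨Or.inl rfl, Or.inl rfl⟩
  · -- first cardinality bound
    have hcA := hdecomp T hTN
    have : Q.ncard ≤ 3 * (Q ∩ sA).ncard := by rw [hcA]; omega
    rw [div_le_iff₀ (by norm_num : (0:ℝ) < 3)]
    have h3 : (Q.ncard : ℝ) ≤ ((Q ∩ sA).ncard : ℝ) * 3 := by exact_mod_cast by omega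
    simpa using h3
  · -- second cardinality bound
    have hcB := hdecomp (N \ T) (Finset.sdiff_subset)
    have hsplit : ∑ u ∈ N \ T, w u + ∑ u ∈ T, w u = ∑ u ∈ N, w u := Finset.sum_sdiff hTN
    have : Q.ncard ≤ 3 * (Q ∩ sB).ncard := by rw [hcB]; omega
    rw [div_le_iff₀ (by norm_num : (0:ℝ) < 3)]
    have h3 : (Q.ncard : ℝ) ≤ ((Q ∩ sB).ncard : ℝ) * 3 := by exact_mod_cast by omega
    simpa using h3
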